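/- Let a > 0 and let u ∈ C⁴([0,a]) satisfy the elastica equation (1/√(1+u'²)) · d/dx( κ_u'/√(1+u'²) ) + (1/2)κ_u³ = 0 on (0,a), where κ_u = u''/(1+u'²)^{3/2}. If u''(0) = 0 and u'''(0) = 0, then u'' ≡ 0 on [0,a]; that is, u is an affine function. -/

import Mathlib

open Real MeasureTheory

/-- The curvature of the graph `(x, u x)`. -/
noncomputable def curv (u : ℝ → ℝ) (x : ℝ) : ℝ :=
  iteratedDeriv 2 u x / (1 + deriv u x ^ 2) ^ ((3:ℝ)/2)

/-- `u` satisfies the elastica equation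
`(1/√(1+u'²)) (κ_u'/√(1+u'²))' + κ_u³/2 = 0` on the set `E`. -/
def ElasticaOn (u : ℝ → ℝ) (E : Set ℝ) : Prop :=
  ∀ x ∈ E,
    (1 / Real.sqrt (1 + deriv u x ^ 2)) *
        deriv (fun y => deriv (curv u) y / Real.sqrt (1 + deriv u y ^ 2)) x
      + (1/2) * curv u x ^ 3 = 0

section Aux

/-- auxiliary: `κ'/w`. -/
noncomputable def myV (u : ℝ → ℝ) (y : ℝ) : ℝ :=
  deriv (curv u) y / Real.sqrt (1 + deriv u y ^ 2)

lemma myV_def (u : ℝ → ℝ) :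
    (fun y => deriv (curv u) y / Real.sqrt (1 + deriv u y ^ 2)) = myV u := rfl

variable {u : ℝ → ℝ} (hu : ContDiff ℝ 4 u)

lemma my_q_pos (x : ℝ) : 0 < 1 + deriv u x ^ 2 := by positivity

lemma my_w_pos (x : ℝ) : 0 < Real.sqrt (1 + deriv u x ^ 2) :=
  Real.sqrt_pos.2 (my_q_pos x)

lemma my_den_pos (x : ℝ) : 0 < (1 + deriv u x ^ 2) ^ ((3:ℝ)/2) :=
  Real.rpow_pos_of_pos (my_q_pos x) _

include hu

lemma my_cd1 : ContDiff ℝ 3 (deriv u) := by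
  have h : (4 : WithTop ℕ∞) = 3 + 1 := by norm_num
  rw [h, contDiff_succ_iff_deriv] at hu
  exact hu.2.2

lemma my_cd2 : ContDiff ℝ 2 (deriv (deriv u)) := by
  have h := my_cd1 hu
  have h3 : (3 : WithTop ℕ∞) = 2 + 1 := by norm_num
  rw [h3, contDiff_succ_iff_deriv] at h
  exact h.2.2

omit hu in
lemma my_i2 : iteratedDeriv 2 u = deriv (deriv u) := by
  ext x
  rw [show (2:ℕ) = 1 + 1 from rfl, iteratedDeriv_succ, iteratedDeriv_one]

lemma my_ci2 : ContDiff ℝ 2 (iteratedDeriv 2 u) := by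
  rw [my_i2]; exact my_cd2 hu

lemma my_cden : ContDiff ℝ 3 (fun x => (1 + deriv u x ^ 2) ^ ((3:ℝ)/2)) := by
  rw [contDiff_iff_contDiffAt]
  intro x
  have hq : ContDiffAt ℝ 3 (fun x => 1 + deriv u x ^ 2) x :=
    contDiffAt_const.add ((my_cd1 hu).contDiffAt.pow 2)
  exact hq.rpow_const_of_ne (ne_of_gt (my_q_pos x))

lemma my_cW : ContDiff ℝ 3 (fun x => Real.sqrt (1 + deriv u x ^ 2)) := by
  rw [contDiff_iff_contDiffAt]
  intro x
  have hq : ContDiffAt ℝ 3 (fun x => 1 + deriv u x ^ 2) x :=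
    contDiffAt_const.add ((my_cd1 hu).contDiffAt.pow 2)
  exact hq.sqrt (ne_of_gt (my_q_pos x))

lemma my_ccurv : ContDiff ℝ 2 (curv u) := by
  show ContDiff ℝ 2 (fun x => iteratedDeriv 2 u x / (1 + deriv u x ^ 2) ^ ((3:ℝ)/2))
  exact (my_ci2 hu).div ((my_cden hu).of_le (by norm_num))
    (fun x => (my_den_pos x).ne')

lemma my_cdcurv : ContDiff ℝ 1 (deriv (curv u)) := by
  have h := my_ccurv hu
  have h2 : (2 : WithTop ℕ∞) = 1 + 1 := by norm_num
  rw [h2, contDiff_succ_iff_deriv] at h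
  exact h.2.2

lemma my_cV : ContDiff ℝ 1 (myV u) := by
  show ContDiff ℝ 1 (fun y => deriv (curv u) y / Real.sqrt (1 + deriv u y ^ 2))
  exact (my_cdcurv hu).div ((my_cW hu).of_le (by norm_num))
    (fun x => (my_w_pos x).ne')

lemma my_dcurv_zero (h2 : iteratedDeriv 2 u 0 = 0) (h3 : iteratedDeriv 3 u 0 = 0) :
    deriv (curv u) 0 = 0 := by
  have hA : DifferentiableAt ℝ (iteratedDeriv 2 u) 0 :=
    (my_ci2 hu).differentiable (by norm_num) 0
  have hB : DifferentiableAt ℝ (fun x => (1 + deriv u x ^ 2) ^ ((3:ℝ)/2)) 0 :=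
    (my_cden hu).differentiable (by norm_num) 0
  have hB0 : (1 + deriv u 0 ^ 2) ^ ((3:ℝ)/2) ≠ 0 := (my_den_pos 0).ne'
  have hcv : curv u = fun x => iteratedDeriv 2 u x / (1 + deriv u x ^ 2) ^ ((3:ℝ)/2) := rfl
  rw [hcv, deriv_fun_div hA hB hB0]
  have hA3 : deriv (iteratedDeriv 2 u) 0 = iteratedDeriv 3 u 0 := by
    have : iteratedDeriv (2+1) u = deriv (iteratedDeriv 2 u) := iteratedDeriv_succ
    rw [show (3:ℕ) = 2 + 1 from rfl, this]
  rw [hA3, h3, h2]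
  ring

end Aux

/-- If `u ∈ C⁴` solves the elastica equation on `(0,a)` with `u''(0) = 0` and
`u'''(0) = 0`, then `u'' ≡ 0` on `[0,a]`, i.e. `u` is affine there. -/
theorem stmt_5 (a : ℝ) (ha : 0 < a) (u : ℝ → ℝ) (hu : ContDiff ℝ 4 u)
    (heq : ElasticaOn u (Set.Ioo 0 a))
    (h2 : iteratedDeriv 2 u 0 = 0) (h3 : iteratedDeriv 3 u 0 = 0) :
    (∀ x ∈ Set.Icc (0:ℝ) a, iteratedDeriv 2 u x = 0) ∧
    ∃ m b : ℝ, ∀ x ∈ Set.Icc (0:ℝ) a, u x = m * x + b := by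
  have hwpos : ∀ x : ℝ, 0 < Real.sqrt (1 + deriv u x ^ 2) := fun x => my_w_pos x
  -- the ODE on the open interval
  have hode : ∀ x ∈ Set.Ioo (0:ℝ) a,
      deriv (myV u) x = -(1/2) * Real.sqrt (1 + deriv u x ^ 2) * curv u x ^ 3 := by
    intro x hx
    have h := heq x hx
    rw [myV_def] at h
    have hw := (hwpos x).ne'
    field_simp at h
    nlinarith [h, hwpos x]
  -- extend to the closed interval by continuity
  have hcV : ContDiff ℝ 1 (myV u) := my_cV hu
  have hcdV : Continuous (deriv (myV u)) := (contDiff_one_iff_deriv.mp hcV).2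
  have hg : Continuous (fun x => -(1/2) * Real.sqrt (1 + deriv u x ^ 2) * curv u x ^ 3) := by
    have := ((my_cW hu).continuous)
    have := ((my_ccurv hu).continuous)
    fun_prop
  have hode' : ∀ x ∈ Set.Icc (0:ℝ) a,
      deriv (myV u) x = -(1/2) * Real.sqrt (1 + deriv u x ^ 2) * curv u x ^ 3 := by
    have hEq : Set.EqOn (deriv (myV u))
        (fun x => -(1/2) * Real.sqrt (1 + deriv u x ^ 2) * curv u x ^ 3)
        (closure (Set.Ioo 0 a)) :=
      Set.EqOn.closure (fun x hx => hode x hx) hcdV hg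
    rw [closure_Ioo ha.ne] at hEq
    exact fun x hx => hEq hx
  -- bounds on the coefficients
  obtain ⟨Bw, hBw⟩ := (isCompact_Icc (a := (0:ℝ)) (b := a)).exists_bound_of_continuousOn
    ((my_cW hu).continuous.continuousOn)
  obtain ⟨Bk, hBk⟩ := (isCompact_Icc (a := (0:ℝ)) (b := a)).exists_bound_of_continuousOn
    ((my_ccurv hu).continuous.continuousOn)
  have h0mem : (0:ℝ) ∈ Set.Icc (0:ℝ) a := ⟨le_refl _, ha.le⟩
  have hBw0 : 0 ≤ Bw := le_trans (norm_nonneg _) (hBw 0 h0mem)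
  have hBk0 : 0 ≤ Bk := le_trans (norm_nonneg _) (hBk 0 h0mem)
  set K : ℝ := Bw * (1 + Bk ^ 2) with hK
  have hK0 : 0 ≤ K := by positivity
  -- the Gronwall argument
  set F : ℝ → ℝ × ℝ := fun x => (curv u x, myV u x) with hF
  have hdF : ∀ x : ℝ, HasDerivAt F (deriv (curv u) x, deriv (myV u) x) x := by
    intro x
    exact (((my_ccurv hu).differentiable (by norm_num) x).hasDerivAt).prodMk
      ((hcV.differentiable (by norm_num) x).hasDerivAt)
  have hdk : ∀ x : ℝ, deriv (curv u) x = Real.sqrt (1 + deriv u x ^ 2) * myV u x := by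
    intro x
    have : myV u x = deriv (curv u) x / Real.sqrt (1 + deriv u x ^ 2) := rfl
    rw [this]
    field_simp
  have key : ∀ x ∈ Set.Icc (0:ℝ) a, ‖F x‖ ≤ gronwallBound 0 K 0 (x - 0) := by
    apply norm_le_gronwallBound_of_norm_deriv_right_le
      (f' := fun x => (deriv (curv u) x, deriv (myV u) x))
    · exact (Continuous.prodMk (my_ccurv hu).continuous hcV.continuous).continuousOn
    · exact fun x _ => (hdF x).hasDerivWithinAt
    · have hk0 : curv u 0 = 0 := by
        show iteratedDeriv 2 u 0 / (1 + deriv u 0 ^ 2) ^ ((3:ℝ)/2) = 0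
        rw [h2]; simp
      have hv0 : myV u 0 = 0 := by
        show deriv (curv u) 0 / Real.sqrt (1 + deriv u 0 ^ 2) = 0
        rw [my_dcurv_zero hu h2 h3]; simp
      simp [hF, hk0, hv0, Prod.norm_def]
    · intro x hx
      have hx' : x ∈ Set.Icc (0:ℝ) a := ⟨hx.1, hx.2.le⟩
      have hw := hBw x hx'
      have hk := hBk x hx'
      rw [Real.norm_eq_abs] at hw hk
      have hFx : ‖F x‖ = max |curv u x| |myV u x| := by
        rw [hF]; rw [Prod.norm_def]; simp [Real.norm_eq_abs]
      have hM0 : 0 ≤ max |curv u x| |myV u x| :=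
        le_trans (abs_nonneg _) (le_max_left _ _)
      have hBwK : Bw ≤ K := by nlinarith [sq_nonneg Bk]
      have h1 : |deriv (curv u) x| ≤ K * ‖F x‖ := by
        rw [hdk x, abs_mul, hFx]
        have hle : |myV u x| ≤ max |curv u x| |myV u x| := le_max_right _ _
        calc |Real.sqrt (1 + deriv u x ^ 2)| * |myV u x|
            ≤ Bw * (max |curv u x| |myV u x|) :=
              mul_le_mul hw hle (abs_nonneg _) hBw0
          _ ≤ K * (max |curv u x| |myV u x|) :=
              mul_le_mul_of_nonneg_right hBwK hM0
      have h2' : |deriv (myV u) x| ≤ K * ‖F x‖ := by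
        rw [hode' x hx', hFx]
        have hle : |curv u x| ≤ max |curv u x| |myV u x| := le_max_left _ _
        have e : |(-(1/2) * Real.sqrt (1 + deriv u x ^ 2) * curv u x ^ 3)|
            = (1/2) * |Real.sqrt (1 + deriv u x ^ 2)| * |curv u x| ^ 3 := by
          rw [abs_mul, abs_mul, abs_pow]
          norm_num
        rw [e]
        have hsq : |curv u x| ^ 2 ≤ Bk ^ 2 := by nlinarith [abs_nonneg (curv u x)]
        have h3' : |curv u x| ^ 3 ≤ Bk ^ 2 * |curv u x| := by
          calc |curv u x| ^ 3 = |curv u x| ^ 2 * |curv u x| := by ring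
            _ ≤ Bk ^ 2 * |curv u x| := mul_le_mul_of_nonneg_right hsq (abs_nonneg _)
        calc (1/2) * |Real.sqrt (1 + deriv u x ^ 2)| * |curv u x| ^ 3
            ≤ (1/2) * Bw * (Bk ^ 2 * |curv u x|) := by
              have hw3 : (1/2) * |Real.sqrt (1 + deriv u x ^ 2)| ≤ (1/2) * Bw := by linarith
              exact mul_le_mul hw3 h3' (pow_nonneg (abs_nonneg _) 3) (by positivity)
          _ ≤ K * (max |curv u x| |myV u x|) := by
              have hk2 : Bk ^ 2 * |curv u x| ≤ (1 + Bk ^ 2) * (max |curv u x| |myV u x|) := by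
                have := le_max_left |curv u x| |myV u x|
                nlinarith [sq_nonneg Bk, abs_nonneg (curv u x)]
              calc (1/2) * Bw * (Bk ^ 2 * |curv u x|)
                  ≤ Bw * (Bk ^ 2 * |curv u x|) := by
                    nlinarith [mul_nonneg (sq_nonneg Bk) (abs_nonneg (curv u x))]
                _ ≤ Bw * ((1 + Bk ^ 2) * (max |curv u x| |myV u x|)) :=
                    mul_le_mul_of_nonneg_left hk2 hBw0
                _ = K * (max |curv u x| |myV u x|) := by ring
      rw [Prod.norm_def]
      simp only [Real.norm_eq_abs]
      rw [max_le_iff]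
      constructor <;> [skip; skip] <;> simp only [add_zero] <;> [exact h1; exact h2']
  have hκ0 : ∀ x ∈ Set.Icc (0:ℝ) a, curv u x = 0 := by
    intro x hx
    have h := key x hx
    rw [gronwallBound_ε0_δ0] at h
    have hF0 : ‖F x‖ = 0 := le_antisymm h (norm_nonneg _)
    have : |curv u x| ≤ ‖F x‖ := by
      rw [hF, Prod.norm_def]
      simp [Real.norm_eq_abs, le_max_left]
    rw [hF0] at this
    exact abs_eq_zero.mp (le_antisymm this (abs_nonneg _))
  have hu2 : ∀ x ∈ Set.Icc (0:ℝ) a, iteratedDeriv 2 u x = 0 := by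
    intro x hx
    have h := hκ0 x hx
    have : iteratedDeriv 2 u x / (1 + deriv u x ^ 2) ^ ((3:ℝ)/2) = 0 := h
    rcases div_eq_zero_iff.mp this with h' | h'
    · exact h'
    · exact absurd h' (my_den_pos (u := u) x).ne'
  refine ⟨hu2, deriv u 0, u 0 - deriv u 0 * 0, ?_⟩
  have hm : ∀ x ∈ Set.Icc (0:ℝ) a, deriv u x = deriv u 0 := by
    apply constant_of_has_deriv_right_zero ((my_cd1 hu).continuous.continuousOn)
    intro x hx
    have hz : deriv (deriv u) x = 0 := by
      rw [← my_i2]; exact hu2 x ⟨hx.1, hx.2.le⟩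
    have hd' : HasDerivAt (deriv u) (deriv (deriv u) x) x := by
      exact (((my_cd1 hu).differentiable (by norm_num)) x).hasDerivAt
    rw [hz] at hd'
    exact hd'.hasDerivWithinAt
  have hconst : ∀ x ∈ Set.Icc (0:ℝ) a, u x - deriv u 0 * x = u 0 - deriv u 0 * 0 := by
    apply constant_of_has_deriv_right_zero
    · exact (hu.continuous.sub (continuous_const.mul continuous_id)).continuousOn
    · intro x hx
      have h1 : HasDerivAt u (deriv u x) x := (hu.differentiable (by norm_num) x).hasDerivAt
      have h2' : HasDerivAt (fun y => deriv u 0 * y) (deriv u 0) x := by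
        simpa using (hasDerivAt_id x).const_mul (deriv u 0)
      have h := h1.sub h2'
      rw [hm x ⟨hx.1, hx.2.le⟩, sub_self] at h
      exact h.hasDerivWithinAt
  intro x hx
  have := hconst x hx
  linarith
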